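/- For the CES production function, lim_{k→∞} d/dk [log(F_X(e^k,1)/F_K(e^k,1))] equals ρ if ρ < 1, equals α if ρ = 1, and equals 0 if ρ > 1; equivalently, the elasticity of substitution σ(K,1), defined as the reciprocal of this derivative, tends to 1/ρ, 1/α, and ∞, respectively, as K → ∞. (CES part of the Elasticity Lemma.) -/

import Mathlib

open Filter Topology

set_option maxHeartbeats 1000000

/-- CES production function `f(K,X)` (Cobb–Douglas when `ρ = 1`). -/
noncomputable def cesf (A a ρ : ℝ) (K X : ℝ) : ℝ :=
  if ρ = 1 then A * K ^ a * X ^ (1 - a)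
  else A * (a * K ^ (1 - ρ) + (1 - a) * X ^ (1 - ρ)) ^ (1 / (1 - ρ))

/-- `F(K,X) = f(K,X) + (1−δ)K`. -/
noncomputable def cesF (A a ρ δ : ℝ) (K X : ℝ) : ℝ := cesf A a ρ K X + (1 - δ) * K

/-- Marginal product of capital `F_K(K,1)`. -/
noncomputable def cesFK (A a ρ δ : ℝ) (K : ℝ) : ℝ := deriv (fun k => cesF A a ρ δ k 1) K

/-- Marginal product of land `F_X(K,1)`. -/
noncomputable def cesFX (A a ρ δ : ℝ) (K : ℝ) : ℝ := deriv (fun x => cesF A a ρ δ K x) 1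

/-- `k ↦ log(F_X(e^k,1)/F_K(e^k,1))`, whose derivative is the reciprocal of the
elasticity of substitution. -/
noncomputable def cesLogRatio (A a ρ δ : ℝ) (k : ℝ) : ℝ :=
  Real.log (cesFX A a ρ δ (Real.exp k) / cesFK A a ρ δ (Real.exp k))

/-- Elasticity of substitution `σ(K,1)`, the reciprocal of the derivative of the
log marginal-rate-of-substitution along `X = 1`. -/
noncomputable def cesSigma (A a ρ δ : ℝ) (K : ℝ) : ℝ :=
  (deriv (cesLogRatio A a ρ δ) (Real.log K))⁻¹

namespace CESaux

noncomputable def G (a ρ k : ℝ) : ℝ := a * Real.exp ((1 - ρ) * k) + (1 - a)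
noncomputable def u (A a ρ k : ℝ) : ℝ := A * a * (G a ρ k) ^ (ρ / (1 - ρ)) * Real.exp ((-ρ) * k)

variable {A a ρ δ k : ℝ}

lemma hG (ha : a ∈ Set.Ioo (0:ℝ) 1) : 0 < G a ρ k := by
  have := Real.exp_pos ((1 - ρ) * k)
  have h1 := ha.1; have h2 := ha.2
  unfold G; nlinarith

lemma hu (hA : 0 < A) (ha : a ∈ Set.Ioo (0:ℝ) 1) : 0 < u A a ρ k := by
  have h1 := hG (ρ := ρ) (k := k) ha
  have h2 := Real.exp_pos (-(ρ * k))
  have h3 : (0:ℝ) < (G a ρ k) ^ (ρ / (1 - ρ)) := Real.rpow_pos_of_pos h1 _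
  have ha1 := ha.1
  unfold u; positivity

lemma exp_rpow (k p : ℝ) : Real.exp k ^ p = Real.exp (p * k) := by
  rw [mul_comm, Real.exp_mul]

lemma FK_eq (hA : 0 < A) (ha : a ∈ Set.Ioo (0:ℝ) 1) (hρ1 : ρ ≠ 1) :
    cesFK A a ρ δ (Real.exp k) = u A a ρ k + (1 - δ) := by
  have hK : (0:ℝ) < Real.exp k := Real.exp_pos k
  have hGK : 0 < a * Real.exp k ^ (1 - ρ) + (1 - a) := by
    rw [exp_rpow]; exact hG ha
  have h1ρ : (1:ℝ) - ρ ≠ 0 := sub_ne_zero.2 (Ne.symm hρ1)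
  have h1 : HasDerivAt (fun x : ℝ => x ^ (1 - ρ)) ((1-ρ) * Real.exp k ^ (1 - ρ - 1)) (Real.exp k) :=
    Real.hasDerivAt_rpow_const (Or.inl hK.ne')
  have h2 : HasDerivAt (fun x : ℝ => a * x ^ (1 - ρ) + (1 - a)) (a * ((1-ρ) * Real.exp k ^ (1 - ρ - 1))) (Real.exp k) :=
    (h1.const_mul a).add_const _
  have h3 := h2.rpow_const (p := 1 / (1 - ρ)) (Or.inl hGK.ne')
  have h4 := (h3.const_mul A).add ((hasDerivAt_id (Real.exp k)).const_mul (1 - δ))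
  have h5 : (fun x : ℝ => A * (a * x ^ (1 - ρ) + (1 - a)) ^ (1 / (1 - ρ)) + (1 - δ) * x)
      = fun x => cesF A a ρ δ x 1 := by
    funext x; simp [cesF, cesf, if_neg hρ1, Real.one_rpow]
  simp only [id_eq] at h4
  rw [cesFK, ← h5, (show HasDerivAt (fun x : ℝ => A * (a * x ^ (1 - ρ) + (1 - a)) ^ (1 / (1 - ρ)) + (1 - δ) * x) _ _ from h4).deriv]
  rw [u, G]
  rw [show a * Real.exp k ^ (1-ρ) + (1-a) = a * Real.exp ((1-ρ)*k) + (1-a) by rw [exp_rpow]]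
  rw [show Real.exp k ^ (1 - ρ - 1) = Real.exp ((-ρ) * k) by rw [exp_rpow]; congr 1; ring]
  rw [show (1:ℝ) / (1 - ρ) - 1 = ρ / (1 - ρ) by rw [div_sub_one h1ρ]; ring]
  field_simp

lemma FX_eq (hA : 0 < A) (ha : a ∈ Set.Ioo (0:ℝ) 1) (hρ1 : ρ ≠ 1) :
    cesFX A a ρ δ (Real.exp k) = A * (1 - a) * (G a ρ k) ^ (ρ / (1 - ρ)) := by
  have hK : (0:ℝ) < Real.exp k := Real.exp_pos k
  have hGK : 0 < a * Real.exp k ^ (1 - ρ) + (1 - a) * (1:ℝ) ^ (1-ρ) := by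
    rw [exp_rpow, Real.one_rpow, mul_one]; exact hG ha
  have h1ρ : (1:ℝ) - ρ ≠ 0 := sub_ne_zero.2 (Ne.symm hρ1)
  have h1 : HasDerivAt (fun x : ℝ => x ^ (1 - ρ)) ((1-ρ) * (1:ℝ) ^ (1 - ρ - 1)) 1 :=
    Real.hasDerivAt_rpow_const (Or.inl one_ne_zero)
  have h2 : HasDerivAt (fun x : ℝ => a * Real.exp k ^ (1-ρ) + (1 - a) * x ^ (1 - ρ))
      ((1 - a) * ((1-ρ) * (1:ℝ) ^ (1 - ρ - 1))) 1 := (h1.const_mul (1-a)).const_add _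
  have h3 := h2.rpow_const (p := 1 / (1 - ρ)) (Or.inl hGK.ne')
  have h4 := (h3.const_mul A).add_const ((1 - δ) * Real.exp k)
  have h5 : (fun x : ℝ => A * (a * Real.exp k ^ (1-ρ) + (1 - a) * x ^ (1 - ρ)) ^ (1 / (1 - ρ)) + (1 - δ) * Real.exp k)
      = fun x => cesF A a ρ δ (Real.exp k) x := by
    funext x; simp [cesF, cesf, if_neg hρ1]
  rw [cesFX, ← h5, h4.deriv]
  rw [Real.one_rpow, G, show Real.exp k ^ (1-ρ) = Real.exp ((1-ρ)*k) from exp_rpow k _]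
  rw [show (1:ℝ) / (1 - ρ) - 1 = ρ / (1 - ρ) by rw [div_sub_one h1ρ]; ring]
  rw [Real.one_rpow]
  field_simp

lemma logRatio_eq (hA : 0 < A) (ha : a ∈ Set.Ioo (0:ℝ) 1) (hρ1 : ρ ≠ 1) (hδ : δ ∈ Set.Ioo (0:ℝ) 1) :
    cesLogRatio A a ρ δ k =
      Real.log (A * (1 - a)) + (ρ / (1 - ρ)) * Real.log (G a ρ k)
        - Real.log (u A a ρ k + (1 - δ)) := by
  have hGp := hG (a := a) (ρ := ρ) (k := k) ha
  have hup := hu (ρ := ρ) (k := k) hA ha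
  have hc : (0:ℝ) < 1 - δ := by linarith [hδ.2]
  have hA1a : (0:ℝ) < A * (1 - a) := mul_pos hA (by linarith [ha.2])
  have hpow : (0:ℝ) < (G a ρ k) ^ (ρ / (1 - ρ)) := Real.rpow_pos_of_pos hGp _
  rw [cesLogRatio, FX_eq hA ha hρ1, FK_eq hA ha hρ1,
    Real.log_div (by positivity) (by positivity),
    Real.log_mul hA1a.ne' hpow.ne', Real.log_rpow hGp]

noncomputable def D (A a ρ δ k : ℝ) : ℝ :=
  ρ * a * Real.exp ((1 - ρ) * k) / G a ρ k
    + ρ * (1 - a) * u A a ρ k / (G a ρ k * (u A a ρ k + (1 - δ)))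

lemma hasDerivAt_exp_mul (c k : ℝ) :
    HasDerivAt (fun x : ℝ => Real.exp (c * x)) (c * Real.exp (c * k)) k := by
  have h := ((hasDerivAt_id k).const_mul c).exp
  simp only [id_eq, mul_one] at h
  convert h using 1; ring

lemma hasDeriv_phi (hA : 0 < A) (ha : a ∈ Set.Ioo (0:ℝ) 1) (hρ1 : ρ ≠ 1) (hδ : δ ∈ Set.Ioo (0:ℝ) 1) :
    HasDerivAt (fun x => Real.log (A * (1 - a)) + (ρ / (1 - ρ)) * Real.log (G a ρ x)
        - Real.log (u A a ρ x + (1 - δ))) (D A a ρ δ k) k := by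
  have h1ρ : (1:ℝ) - ρ ≠ 0 := sub_ne_zero.2 (Ne.symm hρ1)
  have hGp : (0:ℝ) < a * Real.exp ((1-ρ)*k) + (1-a) := hG ha
  have hup : (0:ℝ) < A * a * (a * Real.exp ((1-ρ)*k) + (1-a)) ^ (ρ/(1-ρ)) * Real.exp ((-ρ)*k) :=
    hu hA ha
  have hc : (0:ℝ) < 1 - δ := by linarith [hδ.2]
  have hden : (0:ℝ) < A * a * (a * Real.exp ((1-ρ)*k) + (1-a)) ^ (ρ/(1-ρ)) * Real.exp ((-ρ)*k) + (1-δ) := by linarith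
  have hE := hasDerivAt_exp_mul (1-ρ) k
  have hG' : HasDerivAt (fun x => a * Real.exp ((1-ρ)*x) + (1-a))
      (a * ((1-ρ) * Real.exp ((1-ρ)*k))) k := (hE.const_mul a).add_const (1-a)
  have hlog1 := ((hG'.log hGp.ne').const_mul (ρ/(1-ρ))).const_add (Real.log (A*(1-a)))
  have hpow := hG'.rpow_const (p := ρ/(1-ρ)) (Or.inl hGp.ne')
  have hu1 := (hpow.const_mul (A*a)).mul (hasDerivAt_exp_mul (-ρ) k)
  have hlog2 := (hu1.add_const (1-δ)).log hden.ne'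
  have h := hlog1.sub hlog2
  have hfun : HasDerivAt (fun x => Real.log (A * (1 - a)) + (ρ / (1 - ρ)) * Real.log (G a ρ x)
        - Real.log (u A a ρ x + (1 - δ)))
      (ρ/(1-ρ) * (a * ((1-ρ) * Real.exp ((1-ρ)*k)) / (a * Real.exp ((1-ρ)*k) + (1-a)))
        - (A * a * (a * ((1-ρ) * Real.exp ((1-ρ)*k)) * (ρ/(1-ρ)) * (a * Real.exp ((1-ρ)*k) + (1-a)) ^ (ρ/(1-ρ) - 1)) * Real.exp ((-ρ)*k)
           + A * a * (a * Real.exp ((1-ρ)*k) + (1-a)) ^ (ρ/(1-ρ)) * (-ρ * Real.exp ((-ρ)*k)))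
          / (A * a * (a * Real.exp ((1-ρ)*k) + (1-a)) ^ (ρ/(1-ρ)) * Real.exp ((-ρ)*k) + (1-δ))) k := by
    simp only [G, u]
    exact h
  convert hfun using 1
  simp only [D, u, G]
  rw [Real.rpow_sub hGp (ρ/(1-ρ)) 1, Real.rpow_one]
  set E := Real.exp ((1-ρ)*k) with hE1
  set e2 := Real.exp ((-ρ)*k) with he2
  set S := (a*E+(1-a)) ^ (ρ/(1-ρ)) with hS
  have h1 : a*E+(1-a) ≠ 0 := hGp.ne'
  have h2 : A*a*S*e2 + (1-δ) ≠ 0 := hden.ne'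
  field_simp
  ring

lemma deriv_logRatio (hA : 0 < A) (ha : a ∈ Set.Ioo (0:ℝ) 1) (hρ1 : ρ ≠ 1) (hδ : δ ∈ Set.Ioo (0:ℝ) 1) (k : ℝ) :
    deriv (cesLogRatio A a ρ δ) k = D A a ρ δ k := by
  have hfun : cesLogRatio A a ρ δ = fun x => Real.log (A * (1 - a)) + (ρ / (1 - ρ)) * Real.log (G a ρ x)
      - Real.log (u A a ρ x + (1 - δ)) := funext fun x => logRatio_eq hA ha hρ1 hδ
  rw [hfun, (hasDeriv_phi hA ha hρ1 hδ).deriv]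

lemma D_pos (hA : 0 < A) (ha : a ∈ Set.Ioo (0:ℝ) 1) (hρ : 0 < ρ) (hδ : δ ∈ Set.Ioo (0:ℝ) 1) :
    0 < D A a ρ δ k := by
  have hGp : 0 < G a ρ k := hG ha
  have hup : 0 < u A a ρ k := hu hA ha
  have hc : (0:ℝ) < 1 - δ := by linarith [hδ.2]
  have hE := Real.exp_pos ((1-ρ)*k)
  have h1a : (0:ℝ) < 1 - a := by linarith [ha.2]
  have ha1 := ha.1
  have h1 : 0 < ρ * a * Real.exp ((1-ρ)*k) / G a ρ k :=
    div_pos (by positivity) hGp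
  have h2 : 0 < ρ * (1-a) * u A a ρ k / (G a ρ k * (u A a ρ k + (1-δ))) :=
    div_pos (by positivity) (mul_pos hGp (by linarith))
  rw [D]; linarith

lemma tendsto_G_atTop (ha : a ∈ Set.Ioo (0:ℝ) 1) (hlt : ρ < 1) :
    Tendsto (fun k => G a ρ k) atTop atTop := by
  have hlin : Tendsto (fun k : ℝ => (1-ρ)*k) atTop atTop :=
    tendsto_id.const_mul_atTop (by linarith)
  have hexp : Tendsto (fun k : ℝ => Real.exp ((1-ρ)*k)) atTop atTop :=
    Real.tendsto_exp_atTop.comp hlin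
  have := tendsto_atTop_add_const_right atTop (1-a) (hexp.const_mul_atTop ha.1)
  exact this

lemma tendsto_u_lt (hA : 0 < A) (ha : a ∈ Set.Ioo (0:ℝ) 1) (hρ : 0 < ρ) (hlt : ρ < 1) :
    Tendsto (fun k => u A a ρ k) atTop (𝓝 (A * a * a ^ (ρ/(1-ρ)))) := by
  have h1ρ : (1:ℝ) - ρ ≠ 0 := by linarith
  have hu_eq : ∀ k, u A a ρ k = A * a * (a + (1-a) * Real.exp (-((1-ρ)*k))) ^ (ρ/(1-ρ)) := by
    intro k
    rw [u, G]
    rw [show Real.exp ((-ρ)*k) = (Real.exp (-((1-ρ)*k))) ^ (ρ/(1-ρ)) by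
      rw [exp_rpow]; congr 1; field_simp]
    rw [mul_assoc, ← Real.mul_rpow (le_of_lt (show (0:ℝ) < a * Real.exp ((1-ρ)*k) + (1-a) from hG ha)) (Real.exp_pos _).le]
    congr 2
    show (a * Real.exp ((1-ρ)*k) + (1-a)) * Real.exp (-((1-ρ)*k)) = _
    have h1 : Real.exp ((1-ρ)*k) * Real.exp (-((1-ρ)*k)) = 1 := by
      rw [← Real.exp_add]; simp
    rw [add_mul, mul_assoc, h1, mul_one]
  have hlin : Tendsto (fun k : ℝ => -((1-ρ)*k)) atTop atBot :=
    tendsto_neg_atTop_atBot.comp (tendsto_id.const_mul_atTop (by linarith : (0:ℝ) < 1-ρ))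
  have hexp0 : Tendsto (fun k : ℝ => Real.exp (-((1-ρ)*k))) atTop (𝓝 0) :=
    Real.tendsto_exp_atBot.comp hlin
  have hinner : Tendsto (fun k : ℝ => a + (1-a) * Real.exp (-((1-ρ)*k))) atTop (𝓝 a) := by
    have := tendsto_const_nhds (x := a) (f := atTop (α := ℝ)) |>.add
      (hexp0.const_mul (1-a))
    simpa using this
  have h2 := (hinner.rpow_const (p := ρ/(1-ρ)) (Or.inl ha.1.ne')).const_mul (A*a)
  exact Tendsto.congr (fun k => (hu_eq k).symm) h2

lemma tendsto_D_lt (hA : 0 < A) (ha : a ∈ Set.Ioo (0:ℝ) 1) (hρ : 0 < ρ) (hlt : ρ < 1)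
    (hδ : δ ∈ Set.Ioo (0:ℝ) 1) :
    Tendsto (fun k => D A a ρ δ k) atTop (𝓝 ρ) := by
  have hGtop := tendsto_G_atTop ha hlt
  have hterm1 : Tendsto (fun k => ρ * a * Real.exp ((1-ρ)*k) / G a ρ k) atTop (𝓝 ρ) := by
    have h0 : Tendsto (fun k => ρ * (1-a) / G a ρ k) atTop (𝓝 0) :=
      Tendsto.div_atTop tendsto_const_nhds hGtop
    have heq : ∀ k, ρ * a * Real.exp ((1-ρ)*k) / G a ρ k = ρ - ρ * (1-a) / G a ρ k := by
      intro k
      have hGp : (0:ℝ) < a * Real.exp ((1-ρ)*k) + (1-a) := hG ha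
      simp only [G]
      field_simp
      ring
    have h3 := tendsto_const_nhds (x := ρ) (f := atTop (α := ℝ)) |>.sub h0
    rw [sub_zero] at h3
    exact Tendsto.congr (fun k => (heq k).symm) h3
  set L := A * a * a ^ (ρ/(1-ρ)) with hL
  have hLpos : 0 < L := by
    have ha1 := ha.1
    have h4 := Real.rpow_pos_of_pos ha.1 (ρ/(1-ρ))
    rw [hL]; positivity
  have hc : (0:ℝ) < 1 - δ := by linarith [hδ.2]
  have huL := tendsto_u_lt hA ha hρ hlt
  have hterm2 : Tendsto (fun k => ρ * (1-a) * u A a ρ k / (G a ρ k * (u A a ρ k + (1-δ)))) atTop (𝓝 0) := by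
    have heq : ∀ k, (ρ * (1-a) * u A a ρ k / (u A a ρ k + (1-δ))) * (G a ρ k)⁻¹
        = ρ * (1-a) * u A a ρ k / (G a ρ k * (u A a ρ k + (1-δ))) := by
      intro k; simp only [div_eq_mul_inv, mul_inv]; ring
    have hnum : Tendsto (fun k => ρ * (1-a) * u A a ρ k / (u A a ρ k + (1-δ))) atTop
        (𝓝 (ρ * (1-a) * L / (L + (1-δ)))) :=
      ((huL.const_mul (ρ*(1-a))).div (huL.add_const (1-δ)) (ne_of_gt (by linarith)))
    have hm := hnum.mul hGtop.inv_tendsto_atTop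
    rw [mul_zero] at hm
    exact Tendsto.congr heq hm
  have := hterm1.add hterm2
  rw [add_zero] at this
  exact this

lemma tendsto_D_gt (hA : 0 < A) (ha : a ∈ Set.Ioo (0:ℝ) 1) (hρ : 0 < ρ) (hgt : 1 < ρ)
    (hδ : δ ∈ Set.Ioo (0:ℝ) 1) :
    Tendsto (fun k => D A a ρ δ k) atTop (𝓝 0) := by
  have h1a : (0:ℝ) < 1 - a := by linarith [ha.2]
  have hc : (0:ℝ) < 1 - δ := by linarith [hδ.2]
  have hlin : Tendsto (fun k : ℝ => (1-ρ)*k) atTop atBot := by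
    have : Tendsto (fun k : ℝ => -((ρ-1)*k)) atTop atBot :=
      tendsto_neg_atTop_atBot.comp (tendsto_id.const_mul_atTop (by linarith : (0:ℝ) < ρ-1))
    refine this.congr (fun k => by ring)
  have hexpE0 : Tendsto (fun k : ℝ => Real.exp ((1-ρ)*k)) atTop (𝓝 0) :=
    Real.tendsto_exp_atBot.comp hlin
  have hGlim : Tendsto (fun k => G a ρ k) atTop (𝓝 (1-a)) := by
    have := (hexpE0.const_mul a).add_const (1-a)
    simp only [G]; simpa using this
  have hexp2 : Tendsto (fun k : ℝ => Real.exp ((-ρ)*k)) atTop (𝓝 0) := by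
    refine Real.tendsto_exp_atBot.comp ?_
    have : Tendsto (fun k : ℝ => -(ρ*k)) atTop atBot :=
      tendsto_neg_atTop_atBot.comp (tendsto_id.const_mul_atTop hρ)
    exact this.congr (fun k => by ring)
  have hu0 : Tendsto (fun k => u A a ρ k) atTop (𝓝 0) := by
    have hpow : Tendsto (fun k => (G a ρ k) ^ (ρ/(1-ρ))) atTop (𝓝 ((1-a) ^ (ρ/(1-ρ)))) :=
      hGlim.rpow_const (Or.inl h1a.ne')
    have := ((hpow.const_mul (A*a)).mul hexp2)
    rw [mul_zero] at this
    simp only [u]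
    exact this
  have hterm1 : Tendsto (fun k => ρ * a * Real.exp ((1-ρ)*k) / G a ρ k) atTop (𝓝 0) := by
    have := (hexpE0.const_mul (ρ*a)).div hGlim h1a.ne'
    rw [mul_zero, zero_div] at this; exact this
  have hterm2 : Tendsto (fun k => ρ * (1-a) * u A a ρ k / (G a ρ k * (u A a ρ k + (1-δ)))) atTop (𝓝 0) := by
    have hden : Tendsto (fun k => G a ρ k * (u A a ρ k + (1-δ))) atTop (𝓝 ((1-a) * (0 + (1-δ)))) :=
      hGlim.mul (hu0.add_const (1-δ))
    have := (hu0.const_mul (ρ*(1-a))).div hden (by positivity)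
    rw [mul_zero, zero_div] at this; exact this
  have := hterm1.add hterm2
  rw [add_zero] at this
  exact this

noncomputable def D1 (A a δ k : ℝ) : ℝ :=
  a + A * a * (1-a) * Real.exp ((a-1)*k) / (A * a * Real.exp ((a-1)*k) + (1-δ))

lemma FK1_eq (hA : 0 < A) (ha : a ∈ Set.Ioo (0:ℝ) 1) {k : ℝ} :
    cesFK A a 1 δ (Real.exp k) = A * a * Real.exp ((a-1)*k) + (1-δ) := by
  have hK : (0:ℝ) < Real.exp k := Real.exp_pos k
  have h1 : HasDerivAt (fun x : ℝ => x ^ a) (a * Real.exp k ^ (a-1)) (Real.exp k) :=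
    Real.hasDerivAt_rpow_const (Or.inl hK.ne')
  have h4 := ((h1.const_mul A).mul_const ((1:ℝ) ^ (1-a))).add
    ((hasDerivAt_id (Real.exp k)).const_mul (1-δ))
  simp only [id_eq] at h4
  have h5 : (fun x : ℝ => A * x ^ a * (1:ℝ) ^ (1-a) + (1-δ) * x)
      = fun x => cesF A a 1 δ x 1 := by
    funext x; simp [cesF, cesf]
  rw [cesFK, ← h5, (show HasDerivAt (fun x : ℝ => A * x ^ a * (1:ℝ) ^ (1-a) + (1-δ) * x) _ _ from h4).deriv, Real.one_rpow, exp_rpow]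
  ring

lemma FX1_eq (hA : 0 < A) (ha : a ∈ Set.Ioo (0:ℝ) 1) {k : ℝ} :
    cesFX A a 1 δ (Real.exp k) = A * Real.exp (a*k) * (1-a) := by
  have h1 : HasDerivAt (fun x : ℝ => x ^ (1-a)) ((1-a) * (1:ℝ) ^ (1-a-1)) 1 :=
    Real.hasDerivAt_rpow_const (Or.inl one_ne_zero)
  have h4 := (h1.const_mul (A * Real.exp k ^ a)).add_const ((1-δ) * Real.exp k)
  have h5 : (fun x : ℝ => A * Real.exp k ^ a * x ^ (1-a) + (1-δ) * Real.exp k)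
      = fun x => cesF A a 1 δ (Real.exp k) x := by
    funext x; simp [cesF, cesf]
  rw [cesFX, ← h5, h4.deriv, Real.one_rpow, exp_rpow]
  ring

lemma logRatio1_eq (hA : 0 < A) (ha : a ∈ Set.Ioo (0:ℝ) 1) (hδ : δ ∈ Set.Ioo (0:ℝ) 1) (k : ℝ) :
    cesLogRatio A a 1 δ k = Real.log (A * (1-a)) + a * k
      - Real.log (A * a * Real.exp ((a-1)*k) + (1-δ)) := by
  have hc : (0:ℝ) < 1 - δ := by linarith [hδ.2]
  have h1a : (0:ℝ) < 1 - a := by linarith [ha.2]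
  have ha1 := ha.1
  have he := Real.exp_pos ((a-1)*k)
  have hea := Real.exp_pos (a*k)
  have hden : (0:ℝ) < A * a * Real.exp ((a-1)*k) + (1-δ) := by positivity
  rw [cesLogRatio, FX1_eq hA ha, FK1_eq hA ha,
    Real.log_div (by positivity) hden.ne']
  rw [show A * Real.exp (a*k) * (1-a) = A * (1-a) * Real.exp (a*k) by ring]
  rw [Real.log_mul (by positivity) hea.ne', Real.log_exp]

lemma hasDeriv_psi (hA : 0 < A) (ha : a ∈ Set.Ioo (0:ℝ) 1) (hδ : δ ∈ Set.Ioo (0:ℝ) 1) {k : ℝ} :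
    HasDerivAt (fun x => Real.log (A * (1-a)) + a * x
      - Real.log (A * a * Real.exp ((a-1)*x) + (1-δ))) (D1 A a δ k) k := by
  have hc : (0:ℝ) < 1 - δ := by linarith [hδ.2]
  have ha1 := ha.1
  have he := Real.exp_pos ((a-1)*k)
  have hden : (0:ℝ) < A * a * Real.exp ((a-1)*k) + (1-δ) := by positivity
  have h0 := (hasDerivAt_id k).const_mul a
  simp only [id_eq, mul_one] at h0
  have hE := hasDerivAt_exp_mul (a-1) k
  have hden' := (hE.const_mul (A*a)).add_const (1-δ)
  have hlog := hden'.log hden.ne'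
  have h := (h0.const_add (Real.log (A*(1-a)))).sub hlog
  convert (show HasDerivAt (fun x => Real.log (A * (1-a)) + a * x
    - Real.log (A * a * Real.exp ((a-1)*x) + (1-δ))) _ k from h) using 1
  rw [D1]
  field_simp
  ring

lemma deriv_logRatio1 (hA : 0 < A) (ha : a ∈ Set.Ioo (0:ℝ) 1) (hδ : δ ∈ Set.Ioo (0:ℝ) 1) (k : ℝ) :
    deriv (cesLogRatio A a 1 δ) k = D1 A a δ k := by
  have hfun : cesLogRatio A a 1 δ = fun x => Real.log (A * (1-a)) + a * x
      - Real.log (A * a * Real.exp ((a-1)*x) + (1-δ)) := funext fun x => logRatio1_eq hA ha hδ x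
  rw [hfun, (hasDeriv_psi hA ha hδ).deriv]

lemma tendsto_D1 (hA : 0 < A) (ha : a ∈ Set.Ioo (0:ℝ) 1) (hδ : δ ∈ Set.Ioo (0:ℝ) 1) :
    Tendsto (fun k => D1 A a δ k) atTop (𝓝 a) := by
  have hc : (0:ℝ) < 1 - δ := by linarith [hδ.2]
  have hexp0 : Tendsto (fun k : ℝ => Real.exp ((a-1)*k)) atTop (𝓝 0) := by
    refine Real.tendsto_exp_atBot.comp ?_
    have : Tendsto (fun k : ℝ => -((1-a)*k)) atTop atBot :=
      tendsto_neg_atTop_atBot.comp (tendsto_id.const_mul_atTop (by linarith [ha.2] : (0:ℝ) < 1-a))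
    exact this.congr (fun k => by ring)
  have hterm : Tendsto (fun k => A * a * (1-a) * Real.exp ((a-1)*k)
      / (A * a * Real.exp ((a-1)*k) + (1-δ))) atTop (𝓝 0) := by
    have := (hexp0.const_mul (A*a*(1-a))).div ((hexp0.const_mul (A*a)).add_const (1-δ))
      (by rw [mul_zero, zero_add]; exact hc.ne')
    rw [mul_zero, zero_div] at this; exact this
  have := (tendsto_const_nhds (x := a) (f := atTop (α := ℝ))).add hterm
  rw [add_zero] at this
  exact this

lemma D1_pos (hA : 0 < A) (ha : a ∈ Set.Ioo (0:ℝ) 1) (hδ : δ ∈ Set.Ioo (0:ℝ) 1) {k : ℝ} :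
    0 < D1 A a δ k := by
  have hc : (0:ℝ) < 1 - δ := by linarith [hδ.2]
  have h1a : (0:ℝ) < 1 - a := by linarith [ha.2]
  have ha1 := ha.1
  have he := Real.exp_pos ((a-1)*k)
  have : 0 ≤ A * a * (1-a) * Real.exp ((a-1)*k) / (A * a * Real.exp ((a-1)*k) + (1-δ)) := by
    apply div_nonneg (by positivity) (by positivity)
  rw [D1]; linarith

end CESaux

/-- **Elasticity Lemma, CES part.** For the CES production function,
`lim_{k→∞} d/dk log(F_X(e^k,1)/F_K(e^k,1))` equals `ρ` if `ρ < 1`, `α` if `ρ = 1`, and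
`0` if `ρ > 1`; equivalently, `σ(K,1) → 1/ρ`, `1/α`, `∞`, respectively, as `K → ∞`. -/
theorem elasticity_lemma_CES (A a ρ δ : ℝ) (hA : 0 < A) (ha : a ∈ Set.Ioo (0 : ℝ) 1)
    (hρ : 0 < ρ) (hδ : δ ∈ Set.Ioo (0 : ℝ) 1) :
    ((ρ < 1 → Tendsto (fun k => deriv (cesLogRatio A a ρ δ) k) atTop (𝓝 ρ)) ∧
     (ρ = 1 → Tendsto (fun k => deriv (cesLogRatio A a ρ δ) k) atTop (𝓝 a)) ∧
     (1 < ρ → Tendsto (fun k => deriv (cesLogRatio A a ρ δ) k) atTop (𝓝 0))) ∧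
    ((ρ < 1 → Tendsto (fun K => cesSigma A a ρ δ K) atTop (𝓝 (1 / ρ))) ∧
     (ρ = 1 → Tendsto (fun K => cesSigma A a ρ δ K) atTop (𝓝 (1 / a))) ∧
     (1 < ρ → Tendsto (fun K => cesSigma A a ρ δ K) atTop atTop)) := by
  refine ⟨⟨?_, ?_, ?_⟩, ?_, ?_, ?_⟩
  · intro hlt
    exact Tendsto.congr (fun k => (CESaux.deriv_logRatio hA ha (ne_of_lt hlt) hδ k).symm)
      (CESaux.tendsto_D_lt hA ha hρ hlt hδ)
  · intro h1; subst h1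
    exact Tendsto.congr (fun k => (CESaux.deriv_logRatio1 hA ha hδ k).symm)
      (CESaux.tendsto_D1 hA ha hδ)
  · intro hgt
    exact Tendsto.congr (fun k => (CESaux.deriv_logRatio hA ha (ne_of_gt hgt) hδ k).symm)
      (CESaux.tendsto_D_gt hA ha hρ hgt hδ)
  · intro hlt
    have heq : ∀ K, cesSigma A a ρ δ K = (CESaux.D A a ρ δ (Real.log K))⁻¹ := fun K => by
      rw [cesSigma, CESaux.deriv_logRatio hA ha (ne_of_lt hlt) hδ]
    have hcomp : Tendsto (fun K => CESaux.D A a ρ δ (Real.log K)) atTop (𝓝 ρ) :=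
      (CESaux.tendsto_D_lt hA ha hρ hlt hδ).comp Real.tendsto_log_atTop
    have h2 := hcomp.inv₀ hρ.ne'
    rw [show (1:ℝ)/ρ = ρ⁻¹ from one_div ρ]
    exact Tendsto.congr (fun K => (heq K).symm) h2
  · intro h1; subst h1
    have heq : ∀ K, cesSigma A a 1 δ K = (CESaux.D1 A a δ (Real.log K))⁻¹ := fun K => by
      rw [cesSigma, CESaux.deriv_logRatio1 hA ha hδ]
    have hcomp : Tendsto (fun K => CESaux.D1 A a δ (Real.log K)) atTop (𝓝 a) :=
      (CESaux.tendsto_D1 hA ha hδ).comp Real.tendsto_log_atTop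
    have h2 := hcomp.inv₀ ha.1.ne'
    rw [show (1:ℝ)/a = a⁻¹ from one_div a]
    exact Tendsto.congr (fun K => (heq K).symm) h2
  · intro hgt
    have heq : ∀ K, cesSigma A a ρ δ K = (CESaux.D A a ρ δ (Real.log K))⁻¹ := fun K => by
      rw [cesSigma, CESaux.deriv_logRatio hA ha (ne_of_gt hgt) hδ]
    have hcomp : Tendsto (fun K => CESaux.D A a ρ δ (Real.log K)) atTop (𝓝 0) :=
      (CESaux.tendsto_D_gt hA ha hρ hgt hδ).comp Real.tendsto_log_atTop
    have h0 : Tendsto (fun K => CESaux.D A a ρ δ (Real.log K)) atTop (𝓝[>] 0) :=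
      tendsto_nhdsWithin_of_tendsto_nhds_of_eventually_within _ hcomp
        (Eventually.of_forall fun K => CESaux.D_pos hA ha hρ hδ)
    have h2 := h0.inv_tendsto_nhdsGT_zero
    exact Tendsto.congr (fun K => (heq K).symm) h2
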